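/- Let X be a continuum and let A be a subcontinuum of X. Then A is a subcontinuum of colocal connectedness of X if and only if X \ A is strongly continuumwise connected. -/

import Mathlib

open Set Metric

/-- A subcontinuum of a space `Z`: a nonempty compact connected subset. -/
def IsSubcontinuum {Z : Type*} [TopologicalSpace Z] (S : Set Z) : Prop :=
  IsCompact S ∧ IsConnected S

/-- `A` is a subcontinuum of colocal connectedness of the ambient space: for every
open `U ⊇ A` there is an open `V` with `A ⊆ V ⊆ U` whose complement is connected. -/
def IsColocallyConnected {Z : Type*} [TopologicalSpace Z] (A : Set Z) : Prop :=
  ∀ U : Set Z, IsOpen U → A ⊆ U →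
    ∃ V : Set Z, IsOpen V ∧ A ⊆ V ∧ V ⊆ U ∧ IsPreconnected Vᶜ

/-- The complement of `A` is strongly continuumwise connected: any two points of
`Aᶜ` lie in the interior of a subcontinuum contained in `Aᶜ`. -/
def ComplStronglyCWConnected {Z : Type*} [TopologicalSpace Z] (A : Set Z) : Prop :=
  ∀ x₁ ∈ Aᶜ, ∀ x₂ ∈ Aᶜ, ∃ W : Set Z,
    IsSubcontinuum W ∧ W ⊆ Aᶜ ∧ x₁ ∈ interior W ∧ x₂ ∈ interior W

/-- Let `X` be a continuum and `A` a subcontinuum of `X`. Then `A` is a subcontinuum of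
colocal connectedness of `X` iff `X \ A` is strongly continuumwise connected. -/
theorem stmt0 {X : Type*} [MetricSpace X] [CompactSpace X] [ConnectedSpace X]
    (A : Set X) (hA : IsSubcontinuum A) :
    IsColocallyConnected A ↔ ComplStronglyCWConnected A := by
  have hAcl : IsClosed A := hA.1.isClosed
  have hAne : A.Nonempty := hA.2.1
  constructor
  · intro h x₁ hx₁ x₂ hx₂
    have h₁ : 0 < infDist x₁ A := (hAcl.notMem_iff_infDist_pos hAne).1 hx₁
    have h₂ : 0 < infDist x₂ A := (hAcl.notMem_iff_infDist_pos hAne).1 hx₂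
    set r := min (infDist x₁ A) (infDist x₂ A) / 2 with hr_def
    have hr : 0 < r := by positivity
    have hrlt₁ : r < infDist x₁ A := by
      have := min_le_left (infDist x₁ A) (infDist x₂ A)
      have := lt_min h₁ h₂
      simp only [hr_def]
      linarith [min_le_left (infDist x₁ A) (infDist x₂ A), lt_min h₁ h₂]
    have hrlt₂ : r < infDist x₂ A := by
      simp only [hr_def]
      linarith [min_le_right (infDist x₁ A) (infDist x₂ A), lt_min h₁ h₂]
    set U : Set X := (closedBall x₁ r ∪ closedBall x₂ r)ᶜ with hU_def
    have hUo : IsOpen U := (isClosed_closedBall.union isClosed_closedBall).isOpen_compl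
    have hAU : A ⊆ U := by
      intro a ha
      simp only [hU_def, mem_compl_iff, mem_union, mem_closedBall, not_or]
      constructor
      · intro hle
        have := infDist_le_dist_of_mem (x := x₁) ha
        rw [dist_comm] at hle
        linarith
      · intro hle
        have := infDist_le_dist_of_mem (x := x₂) ha
        rw [dist_comm] at hle
        linarith
    obtain ⟨V, hVo, hAV, hVU, hVc⟩ := h U hUo hAU
    have hball₁ : closedBall x₁ r ⊆ Vᶜ := by
      intro y hy hyV
      exact hVU hyV (Or.inl hy)
    have hball₂ : closedBall x₂ r ⊆ Vᶜ := by
      intro y hy hyV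
      exact hVU hyV (Or.inr hy)
    refine ⟨Vᶜ, ⟨hVo.isClosed_compl.isCompact,
      ⟨x₁, hball₁ (mem_closedBall_self hr.le)⟩, hVc⟩, compl_subset_compl.2 hAV, ?_, ?_⟩
    · exact interior_maximal (ball_subset_closedBall.trans hball₁) isOpen_ball
        (mem_ball_self hr)
    · exact interior_maximal (ball_subset_closedBall.trans hball₂) isOpen_ball
        (mem_ball_self hr)
  · intro h U hUo hAU
    rcases eq_empty_or_nonempty Uᶜ with hne | hne
    · exact ⟨U, hUo, hAU, subset_rfl, by rw [hne]; exact isPreconnected_empty⟩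
    obtain ⟨x₀, hx₀⟩ := hne
    have hx₀A : x₀ ∈ Aᶜ := fun hx => hx₀ (hAU hx)
    have h' : ∀ x : ↥(Uᶜ), ∃ W : Set X,
        IsSubcontinuum W ∧ W ⊆ Aᶜ ∧ (x : X) ∈ interior W ∧ x₀ ∈ interior W :=
      fun x => h x (fun hx => x.2 (hAU hx)) x₀ hx₀A
    choose W hWsub hWA hWm hW0 using h'
    have hUc : IsCompact Uᶜ := hUo.isClosed_compl.isCompact
    obtain ⟨t, ht⟩ := hUc.elim_finite_subcover (fun x : ↥(Uᶜ) => interior (W x))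
      (fun x => isOpen_interior) (fun x hx => mem_iUnion.2 ⟨⟨x, hx⟩, hWm ⟨x, hx⟩⟩)
    set K : Set X := ⋃ i ∈ t, W i with hK_def
    have hKcl : IsClosed K := (t.isCompact_biUnion (fun i _ => (hWsub i).1)).isClosed
    have hKA : K ⊆ Aᶜ := iUnion₂_subset fun i _ => hWA i
    have hKconn : IsPreconnected K := by
      have : K = ⋃₀ ((fun i => W i) '' (t : Set ↥(Uᶜ))) := by
        simp [hK_def, sUnion_image]
      rw [this]
      refine isPreconnected_sUnion x₀ _ ?_ ?_
      · rintro s ⟨i, hi, rfl⟩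
        exact interior_subset (hW0 i)
      · rintro s ⟨i, hi, rfl⟩
        exact (hWsub i).2.2
    refine ⟨Kᶜ, hKcl.isOpen_compl, fun a ha hK => hKA hK ha, ?_, by
      rw [compl_compl]; exact hKconn⟩
    exact compl_subset_comm.2 (ht.trans (iUnion₂_mono fun i _ => interior_subset))
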